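/- Let F be a holomorphic function on the lower half-plane {m ∈ ℂ : Im m < 0}. Suppose there are constants c, δ > 0 and a point m₀ with Im m₀ < 0 and δ < |Im m₀| such that |F′(m)| ≥ c for all m with |m − m₀| ≤ δ (such m automatically lie in the lower half-plane). If |1 − F(m₀)| < c·δ, then there exists m with Im m < 0, |m − m₀| ≤ δ, and F(m) = 1. -/

import Mathlib

open Metric Filter

noncomputable def newtonSeq (F : ℂ → ℂ) (ε : ℝ) (m₀ : ℂ) : ℕ → ℂ
  | 0 => m₀
  | n + 1 => newtonSeq F ε m₀ n
      + (ε : ℂ) * (1 - F (newtonSeq F ε m₀ n)) / deriv F (newtonSeq F ε m₀ n)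

lemma newton_taylor_bound (F : ℂ → ℂ) (s : Set ℂ) (hs : Convex ℝ s)
    (hF : ∀ x ∈ s, DifferentiableAt ℂ F x) (a b : ℂ) (ha : a ∈ s) (hb : b ∈ s)
    (η : ℝ) (hη : ∀ z ∈ s, ‖deriv F z - deriv F a‖ ≤ η) :
    ‖F b - F a - deriv F a * (b - a)‖ ≤ η * ‖b - a‖ := by
  set g : ℂ → ℂ := fun z => F z - deriv F a * z with hg
  have hgd : ∀ x ∈ s, HasFDerivWithinAt g
      (ContinuousLinearMap.smulRight (1 : ℂ →L[ℂ] ℂ) (deriv F x - deriv F a)) s x := by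
    intro x hx
    have h1 : HasDerivAt g (deriv F x - deriv F a) x := by
      have h2 := (hF x hx).hasDerivAt
      have h3 : HasDerivAt (fun z : ℂ => deriv F a * z) (deriv F a) x := by
        simpa using (hasDerivAt_id x).const_mul (deriv F a)
      exact h2.sub h3
    exact (hasDerivAt_iff_hasFDerivAt.mp h1).hasFDerivWithinAt
  have hbound : ∀ x ∈ s,
      ‖ContinuousLinearMap.smulRight (1 : ℂ →L[ℂ] ℂ) (deriv F x - deriv F a)‖ ≤ η := by
    intro x hx
    rw [ContinuousLinearMap.norm_smulRight_apply]
    simpa using hη x hx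
  have := hs.norm_image_sub_le_of_norm_hasFDerivWithin_le hgd hbound ha hb
  have heq : g b - g a = F b - F a - deriv F a * (b - a) := by simp [hg]; ring
  rwa [heq] at this

set_option maxHeartbeats 1600000 in
/-- **Stability of approximate solutions of analytic fixed-point equations.** If `F` is
holomorphic on the lower half-plane, `|F′| ≥ c` on the closed ball of radius `δ` around an
approximate solution `m₀` (a ball contained in the lower half-plane since `δ < |Im m₀|`),
and the residual satisfies `|1 − F(m₀)| < cδ`, then an exact solution of `F(m) = 1` exists
in that ball. -/
theorem newton_flow_stability (F : ℂ → ℂ)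
    (hF : DifferentiableOn ℂ F {m : ℂ | m.im < 0})
    (c δ : ℝ) (hc : 0 < c) (hδ : 0 < δ) (m₀ : ℂ) (hm₀ : m₀.im < 0)
    (hδ' : δ < |m₀.im|)
    (hderiv : ∀ m : ℂ, ‖m - m₀‖ ≤ δ → c ≤ ‖deriv F m‖)
    (hres : ‖1 - F m₀‖ < c * δ) :
    ∃ m : ℂ, m.im < 0 ∧ ‖m - m₀‖ ≤ δ ∧ F m = 1 := by
  set S : Set ℂ := {m : ℂ | m.im < 0} with hS
  have hopen : IsOpen S := isOpen_lt Complex.continuous_im continuous_const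
  set K : Set ℂ := Metric.closedBall m₀ δ with hK
  have hKmem : ∀ z : ℂ, z ∈ K ↔ ‖z - m₀‖ ≤ δ := by
    intro z; rw [hK, Metric.mem_closedBall, Complex.dist_eq]
  have hKS : K ⊆ S := by
    intro m hm
    rw [hKmem] at hm
    have h1 : |(m - m₀).im| ≤ δ := le_trans (Complex.abs_im_le_norm _) hm
    rw [Complex.sub_im, abs_le] at h1
    have : |m₀.im| = -m₀.im := abs_of_neg hm₀
    simp only [hS, Set.mem_setOf_eq]
    linarith [h1.2]
  have hdiff : ∀ x ∈ K, DifferentiableAt ℂ F x := fun x hx =>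
    hF.differentiableAt (hopen.mem_nhds (hKS hx))
  have hanF : AnalyticOnNhd ℂ F S := hF.analyticOnNhd hopen
  have hcontd : ContinuousOn (deriv F) K := (hanF.deriv.continuousOn).mono hKS
  have hucd : UniformContinuousOn (deriv F) K :=
    (isCompact_closedBall m₀ δ).uniformContinuousOn_of_continuous hcontd
  set ρ : ℝ := ‖1 - F m₀‖ with hρdef
  have hρeq : ‖1 - F m₀‖ = ρ := rfl
  have hρ0 : 0 ≤ ρ := norm_nonneg _
  clear_value ρ
  clear hρdef
  -- choose η
  have hρδc : ρ/δ < c := by rw [div_lt_iff₀ hδ]; linarith [hres]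
  obtain ⟨η, hη0, hηc, hDδ'⟩ : ∃ η : ℝ, 0 < η ∧ η < c ∧ ρ/(c-η) ≤ δ := by
    refine ⟨(c - ρ/δ)/2, by linarith, ?_, ?_⟩
    · have : 0 ≤ ρ/δ := div_nonneg hρ0 hδ.le
      linarith
    · have hcη : (0:ℝ) < c - (c - ρ/δ)/2 := by
        have : 0 ≤ ρ/δ := div_nonneg hρ0 hδ.le
        linarith
      rw [div_le_iff₀ hcη]
      have heq : δ * (c - (c - ρ/δ)/2) = (δ*c + ρ)/2 := by field_simp; ring
      rw [heq]; linarith [hres]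
  have hcη : 0 < c - η := by linarith
  set D : ℝ := ρ/(c - η) with hDdef
  have hD0 : 0 ≤ D := div_nonneg hρ0 hcη.le
  have hDδ : D ≤ δ := hDδ'
  -- uniform continuity modulus
  obtain ⟨θ, hθ0, hθ⟩ := (uniformContinuousOn_iff.mp hucd) η hη0
  -- choose ε
  obtain ⟨ε, hε0, hε1, hεθ⟩ : ∃ ε : ℝ, 0 < ε ∧ ε ≤ 1 ∧ ε * ρ / c < θ := by
    refine ⟨min 1 (c*θ/(2*(ρ+1))), lt_min one_pos (by positivity), min_le_left _ _, ?_⟩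
    have h1 : min 1 (c*θ/(2*(ρ+1))) ≤ c*θ/(2*(ρ+1)) := min_le_right _ _
    rw [div_lt_iff₀ hc]
    have h2 : min 1 (c*θ/(2*(ρ+1))) * ρ ≤ (c*θ/(2*(ρ+1))) * ρ :=
      mul_le_mul_of_nonneg_right h1 hρ0
    have h3 : (c*θ/(2*(ρ+1))) * ρ < θ * c := by
      rw [div_mul_eq_mul_div, div_lt_iff₀ (by positivity : (0:ℝ) < 2*(ρ+1))]
      nlinarith [mul_pos hc hθ0, mul_nonneg (mul_pos hc hθ0).le hρ0]
    linarith
  set L : ℝ := 1 - ε*(c-η)/c with hLdef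
  have hL0 : 0 ≤ L := by
    have h1 : ε*(c-η)/c ≤ 1 := by
      rw [div_le_one hc]; nlinarith
    simp only [hLdef]; linarith
  have hL1 : L < 1 := by
    have : 0 < ε*(c-η)/c := by positivity
    simp only [hLdef]; linarith
  have hid : ε * ρ / c = D * (1 - L) := by
    simp only [hLdef, hDdef]
    field_simp
    ring
  have hLeq : 1 - ε + ε * η / c = L := by
    simp only [hLdef]
    field_simp
    ring
  clear_value D L
  clear hLdef hDdef hDδ' hρδc
  -- the Newton sequence and its basic recurrence
  set seq : ℕ → ℂ := newtonSeq F ε m₀ with hseqdef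
  have hseq0 : seq 0 = m₀ := rfl
  have hstep : ∀ n, seq (n+1) = seq n + (ε:ℂ) * (1 - F (seq n)) / deriv F (seq n) :=
    fun n => rfl
  clear_value seq
  clear hseqdef
  -- main invariant
  have main : ∀ k, ‖1 - F (seq k)‖ ≤ L^k * ρ ∧
      ‖seq k - m₀‖ ≤ D * (1 - L^k) := by
    intro k
    induction k with
    | zero => simp [hseq0, hρeq]
    | succ k ih =>
      obtain ⟨ihr, ihd⟩ := ih
      set a : ℂ := seq k with ha
      have hLk1 : L^k ≤ 1 := pow_le_one₀ hL0 hL1.le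
      have hLk0 : (0:ℝ) ≤ L^k := pow_nonneg hL0 k
      have haK : a ∈ K := by rw [hKmem]; nlinarith
      have hdaK : c ≤ ‖deriv F a‖ := hderiv a ((hKmem a).mp haK)
      have hda0 : deriv F a ≠ 0 := by
        intro h0
        rw [h0] at hdaK
        simp at hdaK
        linarith
      set r : ℂ := 1 - F a with hr
      set h : ℂ := (ε:ℂ) * r / deriv F a with hh
      have hb : seq (k+1) = a + h := hstep k
      have habs_h : ‖h‖ = ε * ‖r‖ / ‖deriv F a‖ := by
        rw [hh, norm_div, norm_mul, Complex.norm_real, Real.norm_eq_abs, abs_of_pos hε0]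
      have hh1 : ‖h‖ ≤ ε * ‖r‖ / c := by
        rw [habs_h]
        exact div_le_div_of_nonneg_left (by positivity) hc hdaK
      have hrρ : ‖r‖ ≤ ρ := le_trans ihr (by nlinarith)
      have hh2 : ‖h‖ < θ := by
        have h9 : ε * ‖r‖ / c ≤ ε * ρ / c :=
          div_le_div_of_nonneg_right (by nlinarith) hc.le
        linarith
      have hhL : ‖h‖ ≤ D * (1 - L) * L^k := by
        have h1 : ε * ‖r‖ / c ≤ ε * (L^k * ρ) / c := by
          have : ε * ‖r‖ ≤ ε * (L^k * ρ) := by nlinarith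
          exact div_le_div_of_nonneg_right this hc.le
        have h2 : ε * (L^k * ρ) / c = D * (1 - L) * L^k := by
          rw [← hid]; ring
        linarith
      have hbdist : ‖seq (k+1) - m₀‖ ≤ D * (1 - L^(k+1)) := by
        rw [hb]
        have he : a + h - m₀ = (a - m₀) + h := by ring
        rw [he]
        refine le_trans (norm_add_le _ _) ?_
        have : D * (1 - L^k) + D * (1-L) * L^k = D * (1 - L^(k+1)) := by ring
        linarith
      refine ⟨?_, hbdist⟩
      have hbK : seq (k+1) ∈ K := by
        rw [hKmem]
        have : D * (1 - L^(k+1)) ≤ D := by nlinarith [pow_nonneg hL0 (k+1)]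
        linarith
      set b : ℂ := seq (k+1) with hbd
      have hsegK : segment ℝ a b ⊆ K := (convex_closedBall m₀ δ).segment_subset haK hbK
      have hsegclose : ∀ z ∈ segment ℝ a b, dist z a < θ := by
        intro z hz
        have h1 : segment ℝ a b ⊆ Metric.closedBall a (dist b a) := by
          apply (convex_closedBall a (dist b a)).segment_subset
          · simp [Metric.mem_closedBall, dist_nonneg]
          · simp [Metric.mem_closedBall]
        have h2 := h1 hz
        rw [Metric.mem_closedBall] at h2
        have h3 : dist b a = ‖h‖ := by
          rw [Complex.dist_eq, hb]
          congr 1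
          ring
        rw [h3] at h2
        linarith
      have hηb : ∀ z ∈ segment ℝ a b, ‖deriv F z - deriv F a‖ ≤ η := by
        intro z hz
        have := hθ z (hsegK hz) a haK (hsegclose z hz)
        rw [dist_eq_norm] at this
        exact this.le
      have htay := newton_taylor_bound F (segment ℝ a b) (convex_segment a b)
        (fun x hx => hdiff x (hsegK hx)) a b (left_mem_segment ℝ a b)
        (right_mem_segment ℝ a b) η hηb
      set E : ℂ := F b - F a - deriv F a * (b - a) with hE
      have hba : b - a = h := by rw [hb]; ring
      have hdah : deriv F a * h = (ε:ℂ) * r := by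
        rw [hh]; field_simp
      have hresid : (1:ℂ) - F b = (1 - (ε:ℂ)) * r - E := by
        rw [hE, hba, hdah, hr]; ring
      have h1 : ‖1 - F b‖ ≤ (1-ε) * ‖r‖ + η * ‖h‖ := by
        rw [hresid]
        have htri : ‖(1 - (ε:ℂ)) * r - E‖
            ≤ ‖(1 - (ε:ℂ)) * r‖ + ‖E‖ := by
          simpa using norm_sub_le ((1 - (ε:ℂ)) * r) E
        refine le_trans htri ?_
        have h2 : ‖(1 - (ε:ℂ)) * r‖ = (1-ε) * ‖r‖ := by
          rw [norm_mul]
          congr 1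
          rw [show (1 - (ε:ℂ)) = ((1 - ε : ℝ) : ℂ) by push_cast; ring,
            Complex.norm_real, Real.norm_eq_abs, abs_of_nonneg (by linarith)]
        have h3 : ‖E‖ ≤ η * ‖h‖ := by
          have h4 := htay
          rw [hba] at h4
          simpa [← hE] using h4
        linarith [h2.le, h3]
      have h4 : (1-ε) * ‖r‖ + η * ‖h‖ ≤ L^(k+1) * ρ := by
        have h5 : η * ‖h‖ ≤ η * (ε * ‖r‖ / c) :=
          mul_le_mul_of_nonneg_left hh1 hη0.le
        have h6 : (1-ε) * ‖r‖ + η * (ε * ‖r‖ / c)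
            = ‖r‖ * L := by
          rw [← hLeq]
          field_simp
        have h7 : ‖r‖ * L ≤ (L^k * ρ) * L :=
          mul_le_mul_of_nonneg_right ihr hL0
        have h8 : (L^k * ρ) * L = L^(k+1) * ρ := by ring
        linarith
      linarith
  -- Cauchy sequence
  have hcauchy : CauchySeq seq := by
    apply cauchySeq_of_le_geometric L (ε*ρ/c) hL1
    intro n
    obtain ⟨hres_n, hdist_n⟩ := main n
    have hLk1 : L^n ≤ 1 := pow_le_one₀ hL0 hL1.le
    have haK : ‖seq n - m₀‖ ≤ δ := by
      nlinarith [mul_nonneg hD0 (pow_nonneg hL0 n)]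
    have hdaK : c ≤ ‖deriv F (seq n)‖ := hderiv _ haK
    rw [dist_comm, Complex.dist_eq, hstep n]
    have he : seq n + (ε:ℂ) * (1 - F (seq n)) / deriv F (seq n) - seq n
        = (ε:ℂ) * (1 - F (seq n)) / deriv F (seq n) := by ring
    rw [he, norm_div, norm_mul, Complex.norm_real, Real.norm_eq_abs, abs_of_pos hε0]
    have h1 : ε * ‖1 - F (seq n)‖ / ‖deriv F (seq n)‖
        ≤ ε * ‖1 - F (seq n)‖ / c :=
      div_le_div_of_nonneg_left (by positivity) hc hdaK
    have h2 : ε * ‖1 - F (seq n)‖ / c ≤ ε * (L^n * ρ) / c :=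
      div_le_div_of_nonneg_right (by nlinarith) hc.le
    have h3 : ε * (L^n * ρ) / c = ε * ρ / c * L^n := by ring
    linarith
  obtain ⟨x, hx⟩ := cauchySeq_tendsto_of_complete hcauchy
  have hxK : x ∈ K := by
    refine IsClosed.mem_of_tendsto Metric.isClosed_closedBall hx
      (Eventually.of_forall fun n => ?_)
    obtain ⟨_, hdist_n⟩ := main n
    rw [hKmem]
    nlinarith [mul_nonneg hD0 (pow_nonneg hL0 n)]
  have hFx : F x = 1 := by
    have hcont : ContinuousAt F x := (hdiff x hxK).continuousAt
    have h2 : Tendsto (fun n => (1:ℂ) - F (seq n)) atTop (nhds (1 - F x)) :=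
      tendsto_const_nhds.sub (hcont.tendsto.comp hx)
    have h3 : Tendsto (fun n => (1:ℂ) - F (seq n)) atTop (nhds 0) := by
      apply squeeze_zero_norm (a := fun n => L^n * ρ)
      · intro n
        simpa using (main n).1
      · have := (tendsto_pow_atTop_nhds_zero_of_lt_one hL0 hL1).mul_const ρ
        simpa using this
    have h4 : (1:ℂ) - F x = 0 := tendsto_nhds_unique h2 h3
    linear_combination -h4
  exact ⟨x, hKS hxK, (hKmem x).mp hxK, hFx⟩
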